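/- arXiv:math/0505189 — 5 statements merged into one kernel-verified Lean document; each statement's English description precedes it below -/
import Mathlib

section
/- Let A₁ be a unital C*-algebra admitting a tracial state, B₁ a C*-subalgebra of A₁, A₂ a unital C*-algebra admitting a tracial state, and f: A₁ → A₂ a unital *-homomorphism. Let B₂ = f(B₁). If the pair (A₁, B₁) has Property (T), then the pair (A₂, B₂) has Property (T). -/
noncomputable section

open scoped ENNReal ComplexOrder

/-- Property (T) for a unital *-algebra `A` over ℂ: there are a finite set `F ⊆ A` and
`ε > 0` such that every Hilbert bimodule over `A` (a Hilbert space with commuting unital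
*-representations of `A` and of the opposite algebra `Aᵐᵒᵖ`) having an `(F, ε)`-central unit
vector has a nonzero central vector. -/
def AlgPropertyT (A : Type) [Ring A] [StarRing A] [Algebra ℂ A] [StarModule ℂ A] : Prop :=
  ∃ (F : Finset A) (ε : ℝ), 0 < ε ∧
    ∀ (H : Type) [NormedAddCommGroup H] [InnerProductSpace ℂ H] [CompleteSpace H]
      (π : A →⋆ₐ[ℂ] (H →L[ℂ] H)) (ρ : Aᵐᵒᵖ →⋆ₐ[ℂ] (H →L[ℂ] H)),
      (∀ (a : A) (b : Aᵐᵒᵖ), Commute (π a) (ρ b)) →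
      (∃ ξ : H, ‖ξ‖ = 1 ∧ ∀ y ∈ F, ‖π y ξ - ρ (MulOpposite.op y) ξ‖ < ε) →
      ∃ η : H, η ≠ 0 ∧ ∀ x : A, π x η = ρ (MulOpposite.op x) η

/-- Property (T) for a pair `(A, B)`, where `B` is a *-subalgebra of `A` (given as the
subset of its elements): every Hilbert bimodule over `A` with an `(F, ε)`-central unit
vector has a nonzero `B`-central vector. -/
def AlgPairPropertyT (A : Type) [Ring A] [StarRing A] [Algebra ℂ A] [StarModule ℂ A]
    (B : Set A) : Prop :=
  ∃ (F : Finset A) (ε : ℝ), 0 < ε ∧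
    ∀ (H : Type) [NormedAddCommGroup H] [InnerProductSpace ℂ H] [CompleteSpace H]
      (π : A →⋆ₐ[ℂ] (H →L[ℂ] H)) (ρ : Aᵐᵒᵖ →⋆ₐ[ℂ] (H →L[ℂ] H)),
      (∀ (a : A) (b : Aᵐᵒᵖ), Commute (π a) (ρ b)) →
      (∃ ξ : H, ‖ξ‖ = 1 ∧ ∀ y ∈ F, ‖π y ξ - ρ (MulOpposite.op y) ξ‖ < ε) →
      ∃ η : H, η ≠ 0 ∧ ∀ b ∈ B, π b η = ρ (MulOpposite.op b) η

/-- A tracial state on a unital complex *-algebra. -/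
def IsTracialState (A : Type) [Ring A] [StarRing A] [Algebra ℂ A] (τ : A →ₗ[ℂ] ℂ) : Prop :=
  τ 1 = 1 ∧ (∀ x : A, 0 ≤ τ (star x * x)) ∧ ∀ x y : A, τ (x * y) = τ (y * x)

/-- If `(A₁, B₁)` is a pair consisting of a unital C*-algebra admitting a tracial state and a
C*-subalgebra, `f : A₁ → A₂` is a unital *-homomorphism into a unital C*-algebra admitting a
tracial state, and `B₂ = f(B₁)`, then Property (T) for `(A₁, B₁)` implies Property (T) for
`(A₂, B₂)`. -/
theorem algPairPropertyT_of_starAlgHom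
    (A₁ : Type) [NormedRing A₁] [StarRing A₁] [CStarRing A₁] [NormedAlgebra ℂ A₁]
    [StarModule ℂ A₁] [CompleteSpace A₁]
    (A₂ : Type) [NormedRing A₂] [StarRing A₂] [CStarRing A₂] [NormedAlgebra ℂ A₂]
    [StarModule ℂ A₂] [CompleteSpace A₂]
    (hτ₁ : ∃ τ : A₁ →ₗ[ℂ] ℂ, IsTracialState A₁ τ)
    (hτ₂ : ∃ τ : A₂ →ₗ[ℂ] ℂ, IsTracialState A₂ τ)
    (B₁ : StarSubalgebra ℂ A₁) (hB₁ : IsClosed (B₁ : Set A₁))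
    (f : A₁ →⋆ₐ[ℂ] A₂)
    (hT : AlgPairPropertyT A₁ (B₁ : Set A₁)) :
    AlgPairPropertyT A₂ (f '' (B₁ : Set A₁)) := by
  classical
  obtain ⟨F, ε, hε, hF⟩ := hT
  refine ⟨F.image f, ε, hε, ?_⟩
  intro H _ _ _ π ρ hcomm ⟨ξ, hξ1, hξc⟩
  -- pull back the bimodule along f
  let fop : A₁ᵐᵒᵖ →⋆ₐ[ℂ] A₂ᵐᵒᵖ :=
    { toFun := fun a => MulOpposite.op (f a.unop)
      map_one' := by simp
      map_mul' := by intro a b; simp [← MulOpposite.op_mul]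
      map_zero' := by simp
      map_add' := by intro a b; simp [← MulOpposite.op_add]
      commutes' := by intro r; simp [Algebra.algebraMap_eq_smul_one]
      map_star' := by intro a; simp [MulOpposite.op_star, map_star] }
  obtain ⟨η, hη0, hηc⟩ := hF H (π.comp f) (ρ.comp fop)
    (fun a b => hcomm (f a) (fop b))
    ⟨ξ, hξ1, fun y hy => hξc (f y) (Finset.mem_image_of_mem f hy)⟩
  refine ⟨η, hη0, ?_⟩
  rintro b ⟨b₁, hb₁, rfl⟩
  exact hηc b₁ hb₁
end
end

section
/- Let 𝓗 be a complex Hilbert space and (Uᵢ) a sequence of unitary operators on 𝓗 such that ⟨Uᵢ η₁, η₂⟩ → 0 as i → ∞ for all η₁, η₂ ∈ 𝓗. If K is a finite-dimensional subspace of 𝓗 such that Uᵢ(K) ⊆ K for all i, then K = {0}. -/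
noncomputable section

open scoped ENNReal ComplexOrder

open Filter in
/-- If `(Uᵢ)` is a sequence of unitary operators whose matrix coefficients all tend to `0`,
then the only finite-dimensional subspace invariant under all the `Uᵢ` is the zero
subspace. -/
theorem finiteDimensional_invariant_subspace_eq_bot_of_coefficients_tendsto_zero
    (H : Type) [NormedAddCommGroup H] [InnerProductSpace ℂ H] [CompleteSpace H]
    (U : ℕ → (H ≃ₗᵢ[ℂ] H))
    (hU : ∀ η₁ η₂ : H, Tendsto (fun i => (inner ℂ η₂ (U i η₁) : ℂ)) atTop (nhds 0))
    (K : Submodule ℂ H) (hK : FiniteDimensional ℂ K)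
    (hinv : ∀ i : ℕ, ∀ ξ ∈ K, U i ξ ∈ K) :
    K = ⊥ := by
  by_contra hbot
  obtain ⟨ξ, hξK, hξ0⟩ := Submodule.exists_mem_ne_zero_of_ne_bot hbot
  -- orthonormal basis of K
  let b := stdOrthonormalBasis ℂ K
  set f : ℕ → K := fun i => ⟨U i ξ, hinv i ξ hξK⟩ with hf
  have hterm : ∀ j, Tendsto (fun i => (inner ℂ (f i) (b j) * inner ℂ (b j) (f i) : ℂ))
      atTop (nhds 0) := by
    intro j
    have h1 : Tendsto (fun i => (inner ℂ (b j : K) (f i) : ℂ)) atTop (nhds 0) := by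
      exact hU ξ (b j : H)
    have h2 : Tendsto (fun i => (inner ℂ (f i) (b j : K) : ℂ)) atTop (nhds 0) := by
      have : Tendsto (fun i => (starRingEnd ℂ) (inner ℂ (b j : K) (f i))) atTop
          (nhds ((starRingEnd ℂ) 0)) := (Complex.continuous_conj.tendsto 0).comp h1
      simpa [inner_conj_symm] using this
    simpa using h2.mul h1
  have hsum : Tendsto (fun i => (inner ℂ (f i) (f i) : ℂ)) atTop (nhds 0) := by
    have := tendsto_finset_sum Finset.univ (fun j _ => hterm j)
    simpa using this.congr fun i => b.sum_inner_mul_inner (f i) (f i)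
  have hnorm : ∀ i, (inner ℂ (f i) (f i) : ℂ) = (‖ξ‖ : ℂ) ^ 2 := by
    intro i
    rw [inner_self_eq_norm_sq_to_K]
    norm_cast
    have : ‖f i‖ = ‖ξ‖ := (U i).norm_map ξ
    rw [this]
    norm_num
  rw [tendsto_congr hnorm] at hsum
  have := tendsto_nhds_unique hsum tendsto_const_nhds
  have : (‖ξ‖ : ℂ) ^ 2 = 0 := this.symm
  simp [pow_eq_zero_iff, Complex.ofReal_eq_zero, norm_eq_zero] at this
  exact hξ0 (by simpa using this)
end
end

section
/- Let A be a unital C*-algebra that admits no tracial state. Then A has Property (T). -/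
noncomputable section

open scoped ENNReal ComplexOrder

open Filter Topology

theorem keyState
    (A : Type) [NormedRing A] [StarRing A] [CStarRing A] [NormedAlgebra ℂ A]
    [StarModule ℂ A] [CompleteSpace A]
    (F : Finset A) (ε : ℝ)
    (H : Type) [NormedAddCommGroup H] [InnerProductSpace ℂ H] [CompleteSpace H]
    (π : A →⋆ₐ[ℂ] (H →L[ℂ] H)) (ρ : Aᵐᵒᵖ →⋆ₐ[ℂ] (H →L[ℂ] H))
    (hcomm : ∀ (a : A) (b : Aᵐᵒᵖ), Commute (π a) (ρ b))
    (ξ : H) (hξ : ‖ξ‖ = 1)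
    (hc : ∀ y ∈ F, ‖π y ξ - ρ (MulOpposite.op y) ξ‖ < ε) :
    ∃ φ : A →L[ℂ] ℂ, ‖φ‖ ≤ 1 ∧ φ 1 = 1 ∧ (∀ x : A, 0 ≤ φ (star x * x)) ∧
      ∀ x ∈ F, star x ∈ F → ∀ y : A, ‖φ (x * y) - φ (y * x)‖ ≤ 2 * ε * ‖y‖ := by
  letI : CStarAlgebra A := ⟨⟩
  have hπn : ∀ a : A, ‖π a‖ ≤ ‖a‖ := fun a => NonUnitalStarAlgHom.norm_apply_le π a
  set φ₀ : A →ₗ[ℂ] ℂ :=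
    { toFun := fun a => (inner ℂ ξ (π a ξ) : ℂ)
      map_add' := fun a b => by simp [inner_add_right]
      map_smul' := fun c a => by simp [inner_smul_right] } with hφ₀
  have hπvb : ∀ (a : A) (v : H), ‖π a v‖ ≤ ‖a‖ * ‖v‖ := fun a v =>
    ((π a).le_opNorm v).trans (by gcongr; exact hπn a)
  have hb : ∀ a : A, ‖φ₀ a‖ ≤ 1 * ‖a‖ := by
    intro a
    calc ‖(inner ℂ ξ (π a ξ) : ℂ)‖ ≤ ‖ξ‖ * ‖π a ξ‖ := norm_inner_le_norm _ _
      _ ≤ 1 * ‖a‖ := by simpa [hξ] using hπvb a ξ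
  refine ⟨φ₀.mkContinuous 1 hb, (φ₀.mkContinuous_norm_le one_pos.le hb), ?_, ?_, ?_⟩
  · show (inner ℂ ξ (π 1 ξ) : ℂ) = 1
    rw [map_one]
    simp [inner_self_eq_norm_sq_to_K, hξ]
  · intro x
    show (0 : ℂ) ≤ (inner ℂ ξ (π (star x * x) ξ) : ℂ)
    rw [map_mul, ContinuousLinearMap.mul_apply, map_star,
      ContinuousLinearMap.star_eq_adjoint, ContinuousLinearMap.adjoint_inner_right]
    rw [inner_self_eq_norm_sq_to_K]
    positivity
  · intro x hx hsx y
    have hv := (hc x hx).le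
    have hw := (hc (star x) hsx).le
    have hε : 0 ≤ ε := le_trans (norm_nonneg _) hv
    set v := π x ξ - ρ (MulOpposite.op x) ξ with hvdef
    set w := π (star x) ξ - ρ (MulOpposite.op (star x)) ξ with hwdef
    have hadj : (ContinuousLinearMap.adjoint (ρ (MulOpposite.op (star x)))) =
        ρ (MulOpposite.op x) := by
      rw [← ContinuousLinearMap.star_eq_adjoint, ← map_star]
      congr 1
      rw [← MulOpposite.op_star, star_star]
    have e1 : φ₀ (x * y) = (inner ℂ w (π y ξ) : ℂ) + inner ℂ ξ (ρ (MulOpposite.op x) (π y ξ)) := by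
      have h1 : φ₀ (x * y) = (inner ℂ (π (star x) ξ) (π y ξ) : ℂ) := by
        show (inner ℂ ξ (π (x * y) ξ) : ℂ) = _
        rw [map_mul, ContinuousLinearMap.mul_apply, map_star,
          ContinuousLinearMap.star_eq_adjoint, ContinuousLinearMap.adjoint_inner_left]
      rw [h1, show π (star x) ξ = w + ρ (MulOpposite.op (star x)) ξ from (sub_add_cancel _ _).symm,
        inner_add_left]
      congr 1
      rw [← hadj, ContinuousLinearMap.adjoint_inner_right]
    have e2 : (inner ℂ ξ (ρ (MulOpposite.op x) (π y ξ)) : ℂ) = φ₀ (y * x) - inner ℂ ξ (π y v) := by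
      have hco : ρ (MulOpposite.op x) (π y ξ) = π y (ρ (MulOpposite.op x) ξ) := by
        have := (hcomm y (MulOpposite.op x)).eq
        calc ρ (MulOpposite.op x) (π y ξ) = (π y * ρ (MulOpposite.op x)) ξ := by
              rw [this]; rfl
          _ = π y (ρ (MulOpposite.op x) ξ) := rfl
      rw [hco, show ρ (MulOpposite.op x) ξ = π x ξ - v from (sub_sub_cancel _ _).symm,
        map_sub, inner_sub_right]
      congr 1
      show _ = (inner ℂ ξ (π (y * x) ξ) : ℂ)
      rw [map_mul, ContinuousLinearMap.mul_apply]
    have key : φ₀ (x * y) - φ₀ (y * x) = (inner ℂ w (π y ξ) : ℂ) - inner ℂ ξ (π y v) := by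
      rw [e1, e2]; ring
    show ‖φ₀ (x * y) - φ₀ (y * x)‖ ≤ 2 * ε * ‖y‖
    rw [key]
    calc ‖(inner ℂ w (π y ξ) : ℂ) - inner ℂ ξ (π y v)‖
        ≤ ‖(inner ℂ w (π y ξ) : ℂ)‖ + ‖(inner ℂ ξ (π y v) : ℂ)‖ := norm_sub_le _ _
      _ ≤ ‖w‖ * ‖π y ξ‖ + ‖ξ‖ * ‖π y v‖ :=
          add_le_add (norm_inner_le_norm _ _) (norm_inner_le_norm _ _)
      _ ≤ ε * (‖y‖ * 1) + 1 * (‖y‖ * ε) := by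
          gcongr
          · simpa [hξ] using hπvb y ξ
          · exact hξ.le
          · exact (hπvb y v).trans (by gcongr)
      _ = 2 * ε * ‖y‖ := by ring

/-- A unital C*-algebra admitting no tracial state has Property (T). -/
theorem algPropertyT_of_no_tracialState
    (A : Type) [NormedRing A] [StarRing A] [CStarRing A] [NormedAlgebra ℂ A]
    [StarModule ℂ A] [CompleteSpace A]
    (h : ¬∃ τ : A →ₗ[ℂ] ℂ, IsTracialState A τ) :
    AlgPropertyT A := by
  classical
  by_contra hT
  apply h
  -- Step 1: almost-tracial states for every (F, n)
  have hna : ∀ (F : Finset A) (n : ℕ), ∃ φ : A →L[ℂ] ℂ,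
      ‖φ‖ ≤ 1 ∧ φ 1 = 1 ∧ (∀ x : A, 0 ≤ φ (star x * x)) ∧
      ∀ x ∈ F, star x ∈ F → ∀ y : A,
        ‖φ (x * y) - φ (y * x)‖ ≤ 2 * (1 / (n + 1 : ℝ)) * ‖y‖ := by
    intro F n
    by_contra hcon
    apply hT
    refine ⟨F, 1 / (n + 1 : ℝ), by positivity, ?_⟩
    intro H _ _ _ π ρ hcomm hex
    obtain ⟨ξ, hξ1, hξc⟩ := hex
    exact absurd (keyState A F _ H π ρ hcomm ξ hξ1 hξc) hcon
  choose Φ hΦ1 hΦone hΦpos hΦtr using hna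
  -- Step 2: weak-* cluster point
  set Ψ : Finset A × ℕ → WeakDual ℂ A :=
    fun i => StrongDual.toWeakDual (Φ i.1 i.2) with hΨ
  set K : Set (WeakDual ℂ A) := WeakDual.toStrongDual ⁻¹' Metric.closedBall 0 1 with hK
  have hKc : IsCompact K := WeakDual.isCompact_closedBall (0 : StrongDual ℂ A) 1
  have hmem : ∀ i, Ψ i ∈ K := by
    intro i
    simp only [hK, Set.mem_preimage, Metric.mem_closedBall, dist_zero_right]
    exact hΦ1 i.1 i.2
  haveI : IsDirected (Finset A × ℕ) (· ≤ ·) :=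
    ⟨fun a b => ⟨(a.1 ⊔ b.1, a.2 ⊔ b.2), ⟨le_sup_left, le_sup_left⟩,
      ⟨le_sup_right, le_sup_right⟩⟩⟩
  haveI : (atTop : Filter (Finset A × ℕ)).NeBot := atTop_neBot
  set U : Ultrafilter (Finset A × ℕ) := Ultrafilter.of atTop with hU
  have hUle : (↑U : Filter (Finset A × ℕ)) ≤ atTop := Ultrafilter.of_le _
  obtain ⟨τw, hτK, hτ⟩ := hKc.ultrafilter_le_nhds (U.map Ψ)
    (le_principal_iff.mpr (Filter.mem_map.mpr (Filter.univ_mem' hmem)))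
  have heval : ∀ a : A, Tendsto (fun i : Finset A × ℕ => Φ i.1 i.2 a) (U : Filter (Finset A × ℕ)) (𝓝 (τw a)) := by
    intro a
    exact ((WeakDual.eval_continuous a).tendsto τw).comp hτ
  refine ⟨(WeakDual.toStrongDual τw : A →L[ℂ] ℂ).toLinearMap, ?_, ?_, ?_⟩
  · -- τ 1 = 1
    have h1 : Tendsto (fun i : Finset A × ℕ => Φ i.1 i.2 1) (↑U) (𝓝 1) := by
      simp only [fun i : Finset A × ℕ => hΦone i.1 i.2]
      exact tendsto_const_nhds
    exact tendsto_nhds_unique (heval 1) h1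
  · -- positivity
    intro x
    have hcl : IsClosed {z : ℂ | 0 ≤ z} := by
      have : {z : ℂ | 0 ≤ z} = Complex.re ⁻¹' Set.Ici 0 ∩ Complex.im ⁻¹' {0} := by
        ext z
        simp [Complex.le_def, eq_comm]
      rw [this]
      exact (isClosed_Ici.preimage Complex.continuous_re).inter
        (isClosed_singleton.preimage Complex.continuous_im)
    exact hcl.mem_of_tendsto (heval (star x * x))
      (Filter.Eventually.of_forall fun i => hΦpos i.1 i.2 x)
  · -- trace property
    intro x y
    have h1 : Tendsto (fun i : Finset A × ℕ => Φ i.1 i.2 (x * y) - Φ i.1 i.2 (y * x)) (↑U)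
        (𝓝 (τw (x * y) - τw (y * x))) := (heval (x * y)).sub (heval (y * x))
    have h2 : Tendsto (fun i : Finset A × ℕ => Φ i.1 i.2 (x * y) - Φ i.1 i.2 (y * x)) (↑U)
        (𝓝 0) := by
      rw [NormedAddCommGroup.tendsto_nhds_zero]
      intro δ hδ
      obtain ⟨n₀, hn₀⟩ := exists_nat_gt (2 * ‖y‖ / δ)
      have hk : ∀ᶠ i : Finset A × ℕ in atTop,
          ‖Φ i.1 i.2 (x * y) - Φ i.1 i.2 (y * x)‖ < δ := by
        rw [eventually_atTop]
        refine ⟨({x, star x}, n₀), ?_⟩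
        rintro ⟨F, n⟩ ⟨hF, hn⟩
        simp only at hF hn ⊢
        have hxF : x ∈ F := hF (by simp)
        have hsxF : star x ∈ F := hF (by simp)
        have hb := hΦtr F n x hxF hsxF y
        refine lt_of_le_of_lt hb ?_
        have hlt : 2 * ‖y‖ < δ * (n + 1 : ℝ) := by
          have h1 : 2 * ‖y‖ < δ * n₀ := by
            rw [div_lt_iff₀ hδ] at hn₀
            nlinarith
          have : (n₀ : ℝ) ≤ (n : ℝ) + 1 := by exact_mod_cast Nat.le_succ_of_le hn
          nlinarith
        rw [show 2 * (1 / (n + 1 : ℝ)) * ‖y‖ = 2 * ‖y‖ / (n + 1 : ℝ) by ring]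
        rw [div_lt_iff₀ (by positivity)]
        linarith
      exact hk.filter_mono hUle
    have := tendsto_nhds_unique h1 h2
    have := sub_eq_zero.mp this
    exact this
end
end

section
/- Let 𝓗 be a complex Hilbert space and S a subset of the bounded operators on 𝓗 that is closed under taking adjoints. Suppose T is a nonzero compact operator on 𝓗 with aT = Ta for every a ∈ S. Then 𝓗 contains a nonzero finite-dimensional subspace K with a(K) ⊆ K for every a ∈ S. -/
noncomputable section

open scoped ENNReal ComplexOrder
open ContinuousLinearMap Metric Filter Topology

/-- If a nonzero compact operator `T` commutes with a self-adjoint set `S` of bounded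
operators, then there is a nonzero finite-dimensional subspace invariant under `S`. -/
theorem exists_finiteDimensional_invariant_subspace_of_compact_commutant
    (H : Type) [NormedAddCommGroup H] [InnerProductSpace ℂ H] [CompleteSpace H]
    (S : Set (H →L[ℂ] H)) (hS : ∀ a ∈ S, star a ∈ S)
    (T : H →L[ℂ] H) (hT : IsCompact (closure (T '' Metric.closedBall (0 : H) 1)))
    (hT0 : T ≠ 0) (hcomm : ∀ a ∈ S, a * T = T * a) :
    ∃ K : Submodule ℂ H, K ≠ ⊥ ∧ FiniteDimensional ℂ K ∧
      ∀ a ∈ S, ∀ ξ ∈ K, a ξ ∈ K := by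
  set A : H →L[ℂ] H := (ContinuousLinearMap.adjoint T) ∘L T with hA
  have hTc : IsCompactOperator (T : H →ₗ[ℂ] H) := by
    rw [isCompactOperator_iff_isCompact_closure_image_closedBall (T : H →ₗ[ℂ] H) zero_lt_one]
    exact hT
  have hAc : IsCompactOperator (A : H →ₗ[ℂ] H) :=
    hTc.continuous_comp (ContinuousLinearMap.adjoint T).continuous
  have hTnorm : (0:ℝ) < ‖T‖ := norm_pos_iff.mpr hT0
  set μ : ℝ := ‖T‖ ^ 2 with hμdef
  have hμ : (0:ℝ) < μ := pow_pos hTnorm 2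
  -- the key inner-product identity
  have hkey : ∀ x : H, RCLike.re (inner ℂ (A x) x : ℂ) = ‖T x‖ ^ 2 := fun x =>
    (ContinuousLinearMap.apply_norm_sq_eq_inner_adjoint_left T x).symm
  -- choose an almost-maximizing sequence
  have hex : ∀ n : ℕ, ∃ x : H, ‖x‖ ≤ 1 ∧ ‖T‖ - 1/(n+1) < ‖T x‖ := by
    intro n
    obtain ⟨x, hx1, hx2⟩ := T.exists_lt_apply_of_lt_opNorm
      (r := ‖T‖ - 1/(n+1)) (sub_lt_self _ (by positivity))
    exact ⟨x, hx1.le, hx2⟩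
  choose x hx1 hx2 using hex
  have hTx_tendsto : Tendsto (fun n => ‖T (x n)‖) atTop (nhds ‖T‖) := by
    have h1 : Tendsto (fun n : ℕ => ‖T‖ - 1/(n+1)) atTop (nhds ‖T‖) := by
      have := tendsto_one_div_add_atTop_nhds_zero_nat (𝕜 := ℝ)
      have := (tendsto_const_nhds (x := ‖T‖) (f := atTop (α := ℕ))).sub this
      simpa using this
    refine tendsto_of_tendsto_of_tendsto_of_le_of_le h1 tendsto_const_nhds
      (fun n => (hx2 n).le) (fun n => ?_)
    calc ‖T (x n)‖ ≤ ‖T‖ * ‖x n‖ := T.le_opNorm _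
      _ ≤ ‖T‖ * 1 := by nlinarith [hx1 n]
      _ = ‖T‖ := mul_one _
  have hTx2 : Tendsto (fun n => ‖T (x n)‖ ^ 2) atTop (nhds μ) := by
    simpa [hμdef] using hTx_tendsto.pow 2
  -- ‖A xₙ - μ xₙ‖² → 0
  have hbound : ∀ n, ‖A (x n) - (μ:ℂ) • x n‖ ^ 2 ≤ 2*μ^2 - 2*μ*‖T (x n)‖^2 := by
    intro n
    have h0 := norm_sub_sq (𝕜 := ℂ) (A (x n)) ((μ:ℂ) • x n)
    have h1 : RCLike.re (inner ℂ (A (x n)) ((μ:ℂ) • x n) : ℂ) = μ * ‖T (x n)‖^2 := by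
      rw [inner_smul_right]
      simp [hkey]
    have h2 : ‖A (x n)‖ ≤ μ := by
      calc ‖A (x n)‖ ≤ ‖A‖ * ‖x n‖ := A.le_opNorm _
        _ ≤ ‖A‖ * 1 := by nlinarith [hx1 n, norm_nonneg A]
        _ = μ := by rw [mul_one, hA, hμdef, ContinuousLinearMap.norm_adjoint_comp_self, sq]
    have h3 : ‖(μ:ℂ) • x n‖ ≤ μ := by
      rw [norm_smul]
      have : ‖(μ:ℂ)‖ = μ := by
        simp [Complex.norm_real, abs_of_pos hμ]
      nlinarith [hx1 n]
    nlinarith [norm_nonneg (A (x n)), norm_nonneg ((μ:ℂ) • x n)]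
  have hdiff0 : Tendsto (fun n => A (x n) - (μ:ℂ) • x n) atTop (nhds 0) := by
    rw [tendsto_zero_iff_norm_tendsto_zero]
    have hsq : Tendsto (fun n => ‖A (x n) - (μ:ℂ) • x n‖^2) atTop (nhds 0) := by
      have h1 : Tendsto (fun n => 2*μ^2 - 2*μ*‖T (x n)‖^2) atTop
          (nhds (2*μ^2 - 2*μ*μ)) := by
        simpa [mul_comm] using ((tendsto_const_nhds (x := (2*μ^2 : ℝ))
          (f := atTop (α := ℕ))).sub (hTx2.const_mul (2*μ)))
      rw [show (2*μ^2 - 2*μ*μ : ℝ) = 0 by ring] at h1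
      exact tendsto_of_tendsto_of_tendsto_of_le_of_le tendsto_const_nhds h1
        (fun n => by positivity) hbound
    have := hsq.sqrt
    simpa [Real.sqrt_sq (norm_nonneg _)] using this
  -- extract convergent subsequence of A xₙ
  have hC : IsCompact (closure ((A : H →ₗ[ℂ] H) '' Metric.closedBall 0 1)) :=
    hAc.isCompact_closure_image_closedBall 1
  have hmem : ∀ n, A (x n) ∈ closure ((A : H →ₗ[ℂ] H) '' Metric.closedBall 0 1) := fun n =>
    subset_closure ⟨x n, by simpa using hx1 n, rfl⟩
  obtain ⟨y, -, φ, hφ, hy⟩ := hC.tendsto_subseq hmem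
  have hφt : Tendsto φ atTop atTop := hφ.tendsto_atTop
  -- x (φ n) → μ⁻¹ y
  have hμx : Tendsto (fun n => (μ:ℂ) • x (φ n)) atTop (nhds y) := by
    have hd : Tendsto (fun n => A (x (φ n)) - (μ:ℂ) • x (φ n)) atTop (nhds 0) :=
      hdiff0.comp hφt
    have := hy.sub hd
    simpa using this
  set z : H := (μ:ℂ)⁻¹ • y with hz
  have hμ0 : (μ:ℂ) ≠ 0 := by exact_mod_cast hμ.ne'
  have hxz : Tendsto (fun n => x (φ n)) atTop (nhds z) := by
    have := hμx.const_smul ((μ:ℂ)⁻¹)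
    simpa only [inv_smul_smul₀ hμ0] using this
  have hAz : A z = (μ:ℂ) • z := by
    have h1 : Tendsto (fun n => A (x (φ n))) atTop (nhds (A z)) :=
      (A.continuous.tendsto z).comp hxz
    have h2 : A z = y := tendsto_nhds_unique h1 (by exact hy)
    rw [h2, hz, smul_inv_smul₀ hμ0]
  have hz0 : z ≠ 0 := by
    intro h
    have h1 : Tendsto (fun n => ‖T (x (φ n))‖^2) atTop (nhds (‖T z‖^2)) := by
      have := ((T.continuous.tendsto z).comp hxz).norm.pow 2
      exact this
    have h2 : Tendsto (fun n => ‖T (x (φ n))‖^2) atTop (nhds μ) := hTx2.comp hφt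
    have h3 : ‖T z‖^2 = μ := tendsto_nhds_unique h1 h2
    rw [h, map_zero] at h3
    simp at h3
    exact hμ.ne h3
  -- the eigenspace
  set B : H →L[ℂ] H := A - (μ:ℂ) • (1 : H →L[ℂ] H) with hB
  set K : Submodule ℂ H := LinearMap.ker (B : H →ₗ[ℂ] H) with hK
  have hmemK : ∀ ξ, ξ ∈ K ↔ A ξ = (μ:ℂ) • ξ := by
    intro ξ
    rw [hK, LinearMap.mem_ker]
    constructor
    · intro h
      have : A ξ - (μ:ℂ) • ξ = 0 := by simpa [hB] using h
      linear_combination (norm := module) this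
    · intro h
      simp [hB, h]
  refine ⟨K, ?_, ?_, ?_⟩
  · exact Submodule.ne_bot_iff K |>.mpr ⟨z, (hmemK z).mpr hAz, hz0⟩
  · -- finite dimensional
    have hKclosed : IsClosed (K : Set H) := ContinuousLinearMap.isClosed_ker B
    -- the unit ball of K, as a subset of H
    have himg : (Subtype.val '' (closedBall (0 : K) 1)) = (K : Set H) ∩ closedBall (0:H) 1 := by
      ext w
      simp only [Set.mem_image, Set.mem_inter_iff, SetLike.mem_coe, mem_closedBall,
        dist_zero_right]
      constructor
      · rintro ⟨⟨v, hv⟩, hv1, rfl⟩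
        exact ⟨hv, by simpa using hv1⟩
      · rintro ⟨hw, hw1⟩
        exact ⟨⟨w, hw⟩, by simpa using hw1, rfl⟩
    have hsub : (K : Set H) ∩ closedBall (0:H) 1 ⊆
        closure ((A : H →ₗ[ℂ] H) '' Metric.closedBall 0 μ⁻¹) := by
      rintro w ⟨hw, hw1⟩
      refine subset_closure ⟨(μ:ℂ)⁻¹ • w, ?_, ?_⟩
      · simp only [mem_closedBall, dist_zero_right, norm_smul]
        have h1 : ‖(μ:ℂ)⁻¹‖ = μ⁻¹ := by
          rw [norm_inv]
          simp [Complex.norm_real, abs_of_pos hμ]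
        rw [h1]
        have := mem_closedBall_zero_iff.mp hw1
        have hμinv : (0:ℝ) ≤ μ⁻¹ := (inv_pos.mpr hμ).le
        calc μ⁻¹ * ‖w‖ ≤ μ⁻¹ * 1 := by
              exact mul_le_mul_of_nonneg_left (by simpa using hw1) hμinv
          _ = μ⁻¹ := mul_one _
      · have : A w = (μ:ℂ) • w := (hmemK w).mp hw
        show A ((μ:ℂ)⁻¹ • w) = w
        rw [map_smul, this, smul_smul, inv_mul_cancel₀ hμ0, one_smul]
    have hCcompact : IsCompact (closure ((A : H →ₗ[ℂ] H) '' Metric.closedBall 0 μ⁻¹)) :=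
      hAc.isCompact_closure_image_closedBall μ⁻¹
    have hball : IsCompact ((K : Set H) ∩ closedBall (0:H) 1) :=
      hCcompact.of_isClosed_subset (hKclosed.inter Metric.isClosed_closedBall) hsub
    have : IsCompact (closedBall (0 : K) 1) := by
      rw [Subtype.isCompact_iff]
      rw [himg] at *
      exact hball
    exact FiniteDimensional.of_isCompact_closedBall₀ ℂ zero_lt_one this
  · -- invariance
    intro a ha ξ hξ
    have h1 : a * T = T * a := hcomm a ha
    have h2 : star a * T = T * star a := hcomm (star a) (hS a ha)
    have h3 : star T * a = a * star T := by
      have := congrArg star h2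
      simpa [star_mul] using this
    have hAa : a * A = A * a := by
      have : A = star T * T := by
        rw [hA]; rfl
      rw [this]
      calc a * (star T * T) = (a * star T) * T := by rw [mul_assoc]
        _ = (star T * a) * T := by rw [h3]
        _ = star T * (a * T) := by rw [mul_assoc]
        _ = star T * (T * a) := by rw [h1]
        _ = (star T * T) * a := by rw [mul_assoc]
    rw [hmemK] at hξ ⊢
    have := congrFun (congrArg (DFunLike.coe) hAa) ξ
    simp only [ContinuousLinearMap.mul_apply] at this
    rw [← this, hξ, map_smul]
end
end

section
/- Let X be an uncountable compact metrizable topological space. Then the C*-algebra C(X) of continuous complex-valued functions on X (with the supremum norm, pointwise operations, and complex conjugation as involution) does not have Property (T). -/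
noncomputable section

open scoped ENNReal ComplexOrder Topology

/-- Evaluation of the opposite algebra of `C(X, ℂ)` at a point, as a star algebra hom. -/
def evalOpSAH (X : Type) [TopologicalSpace X] (p : X) : C(X, ℂ)ᵐᵒᵖ →⋆ₐ[ℂ] ℂ where
  toFun g := g.unop p
  map_one' := rfl
  map_mul' g h := by simp [MulOpposite.unop_mul, mul_comm]
  map_zero' := rfl
  map_add' g h := rfl
  commutes' c := rfl
  map_star' g := rfl

theorem evalOpSAH_apply (X : Type) [TopologicalSpace X] (p : X) (g : C(X, ℂ)ᵐᵒᵖ) :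
    evalOpSAH X p g = g.unop p := rfl


/-- For an uncountable compact metrizable space `X`, the abelian C*-algebra `C(X)` of
continuous complex-valued functions on `X` does not have Property (T). -/
theorem continuousMap_not_algPropertyT
    (X : Type) [TopologicalSpace X] [CompactSpace X]
    [TopologicalSpace.MetrizableSpace X] [Uncountable X] :
    ¬AlgPropertyT C(X, ℂ) := by
  rintro ⟨F, ε, hε, hT⟩
  letI : MetricSpace X := TopologicalSpace.metrizableSpaceMetric X
  -- X has a non-isolated point
  obtain ⟨p, hp⟩ : ∃ p : X, Filter.NeBot (𝓝[≠] p) := by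
    by_contra h
    push_neg at h
    haveI : DiscreteTopology X := discreteTopology_iff_isOpen_singleton.mpr fun a =>
      (isOpen_singleton_iff_punctured_nhds a).mpr (h a)
    haveI : Finite X := finite_of_compact_of_discrete
    exact not_finite X
  -- a point `x ≠ p` where all elements of `F` are within `ε` of their value at `p`
  have hU : {z : X | ∀ f ∈ F, ‖(f : C(X, ℂ)) z - f p‖ < ε} ∈ 𝓝 p := by
    rw [← Filter.eventually_iff]
    rw [Filter.eventually_all_finset]
    intro f _
    have hc : Filter.Tendsto (fun z => ‖f z - f p‖) (𝓝 p) (𝓝 ‖f p - f p‖) :=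
      ((f.continuous.sub continuous_const).norm).continuousAt
    simpa using hc.eventually_lt_const (by simpa using hε)
  obtain ⟨x, hxU, hxp⟩ :=
    hp.nonempty_of_mem (Filter.inter_mem (mem_nhdsWithin_of_mem_nhds hU) self_mem_nhdsWithin)
  rw [Set.mem_compl_iff, Set.mem_singleton_iff] at hxp
  -- the one-dimensional bimodule
  set π : C(X, ℂ) →⋆ₐ[ℂ] (ℂ →L[ℂ] ℂ) :=
    (StarAlgHom.ofId ℂ (ℂ →L[ℂ] ℂ)).comp (ContinuousMap.evalStarAlgHom ℂ ℂ x) with hπ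
  set ρ : C(X, ℂ)ᵐᵒᵖ →⋆ₐ[ℂ] (ℂ →L[ℂ] ℂ) :=
    (StarAlgHom.ofId ℂ (ℂ →L[ℂ] ℂ)).comp (evalOpSAH X p) with hρ
  have happ : ∀ (c : ℂ) (v : ℂ), (algebraMap ℂ (ℂ →L[ℂ] ℂ) c) v = c * v := by
    intro c v
    simp [Algebra.algebraMap_eq_smul_one, smul_eq_mul]
  obtain ⟨η, hη0, hηc⟩ := hT ℂ π ρ
    (fun a b => Algebra.commutes (a x) (ρ b))
    ⟨1, norm_one, by
      intro y hy
      have : π y 1 - ρ (MulOpposite.op y) 1 = y x - y p := by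
        simp [hπ, hρ, StarAlgHom.comp_apply, StarAlgHom.ofId_apply, happ, evalOpSAH_apply]
      rw [this]
      exact hxU y hy⟩
  -- separate x and p by a continuous function
  set f : C(X, ℂ) := ⟨fun z => (dist z p : ℂ),
    Complex.continuous_ofReal.comp (continuous_id.dist continuous_const)⟩ with hf
  have hfη := hηc f
  have hfx : f x = (dist x p : ℂ) := rfl
  have hfp : f p = 0 := by simp [hf]
  have : (f x) * η = (f p) * η := by
    have := hfη
    simpa [hπ, hρ, StarAlgHom.comp_apply, StarAlgHom.ofId_apply, happ, evalOpSAH_apply] using this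
  rw [hfx, hfp, zero_mul, mul_eq_zero] at this
  rcases this with h | h
  · exact hxp (by exact_mod_cast dist_eq_zero.mp (by exact_mod_cast h))
  · exact hη0 h
end
end
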